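/- Let x be a real number with 0 < x < 1, let g = x(1+x+x^2)/(1+4x+x^2)^2, let R∞ = (1+4x+x^2)/(1+x+x^2), and for every integer k ≥ 0 define R_k = R∞ · (1-x^k)(1-x^{k+3}) / ((1-x^{k+1})(1-x^{k+2})). Then R_0 = 0 and for every k ≥ 1 one has R_k = 1 + g · R_k · (R_{k-1} + R_k + R_{k+1}). -/

import Mathlib

theorem stmt_2 (x : ℝ) (hx0 : 0 < x) (hx1 : x < 1)
    (g Rinf : ℝ)
    (hg : g = x * (1 + x + x^2) / (1 + 4*x + x^2)^2)
    (hRinf : Rinf = (1 + 4*x + x^2) / (1 + x + x^2))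
    (R : ℕ → ℝ)
    (hR : ∀ k : ℕ, R k = Rinf * ((1 - x^k) * (1 - x^(k+3))) /
        ((1 - x^(k+1)) * (1 - x^(k+2)))) :
    R 0 = 0 ∧ ∀ k : ℕ, 1 ≤ k →
      R k = 1 + g * R k * (R (k-1) + R k + R (k+1)) := by
  have hx0' : (0:ℝ) ≤ x := le_of_lt hx0
  have hpow : ∀ n : ℕ, 1 ≤ n → 1 - x^n ≠ 0 := by
    intro n hn
    have : x^n < 1 := pow_lt_one₀ hx0' hx1 (by omega)
    linarith
  have hq : (1 + x + x^2 : ℝ) ≠ 0 := by positivity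
  have hq4 : (1 + 4*x + x^2 : ℝ) ≠ 0 := by positivity
  constructor
  · rw [hR 0]; simp
  · intro k hk
    obtain ⟨m, rfl⟩ : ∃ m, k = m + 1 := ⟨k - 1, by omega⟩
    simp only [Nat.add_sub_cancel]
    rw [hR, hR, hR, hRinf, hg]
    set y := x^m with hy
    have hy0 : 0 < y := pow_pos hx0 m
    have e1 : x^(m+1) = y * x := by rw [hy, pow_succ]
    have e2 : x^(m+2) = y * x^2 := by rw [hy, ← pow_add]
    have e3 : x^(m+3) = y * x^3 := by rw [hy, ← pow_add]
    have e4 : x^(m+4) = y * x^4 := by rw [hy, ← pow_add]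
    have e5 : x^(m+5) = y * x^5 := by rw [hy, ← pow_add]
    have d1 : 1 - y*x ≠ 0 := by rw [← e1]; exact hpow _ (by omega)
    have d2 : 1 - y*x^2 ≠ 0 := by rw [← e2]; exact hpow _ (by omega)
    have d3 : 1 - y*x^3 ≠ 0 := by rw [← e3]; exact hpow _ (by omega)
    have d4 : 1 - y*x^4 ≠ 0 := by rw [← e4]; exact hpow _ (by omega)
    simp only [show m+1+1 = m+2 from rfl, show m+1+2 = m+3 from rfl,
      show m+1+3 = m+4 from rfl, show m+1+1+1 = m+3 from rfl,
      show m+1+1+2 = m+4 from rfl, show m+1+1+3 = m+5 from rfl,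
      e1, e2, e3, e4, e5]
    field_simp [show 1 - x*y ≠ 0 by rwa [mul_comm], show 1 - x^2*y ≠ 0 by rwa [mul_comm],
      show 1 - x^3*y ≠ 0 by rwa [mul_comm], show 1 - x^4*y ≠ 0 by rwa [mul_comm]]
    ring
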